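/- Characterization of (c(X,I), c₀^b(Y,J)) for tall I: Let X, Y be Banach spaces and I, J ideals on ℕ with I tall. A matrix A = (A_{n,k}) of linear operators in L(X,Y) maps every I-convergent X-valued sequence to a bounded Y-valued sequence that J-converges to 0 if and only if there exists k₁ ∈ ℕ such that: (B1) A_{n,k} = 0 for all n and all k ≥ k₁; (B2) sup_n ‖A_{n,k} x‖ < ∞ for all x ∈ X and k < k₁; (B3) J-lim_n A_{n,k} x = 0 for all x ∈ X and k < k₁. -/

import Mathlib

open Filter

/-- Characterization of the matrix class `(c(X,I), c₀ᵇ(Y,J))` for a tall ideal `I`: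
`A` maps every `I`-convergent sequence to a well-defined bounded sequence `J`-converging
to `0` if and only if there is `k₁` such that (B1) `A n k = 0` for `k ≥ k₁`,
(B2) `sup_n ‖A n k x‖ < ∞` for `k < k₁`, and (B3) `J`-`lim_n A n k x = 0` for `k < k₁`. -/
theorem stmt13 {X Y : Type*} [NormedAddCommGroup X] [NormedSpace ℝ X] [CompleteSpace X]
    [NormedAddCommGroup Y] [NormedSpace ℝ Y] [CompleteSpace Y]
    (I J : Set (Set ℕ))
    (hI_sub : ∀ S S' : Set ℕ, S ∈ I → S' ⊆ S → S' ∈ I)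
    (hI_union : ∀ S S' : Set ℕ, S ∈ I → S' ∈ I → S ∪ S' ∈ I)
    (hI_fin : ∀ S : Set ℕ, S.Finite → S ∈ I)
    (hI_proper : Set.univ ∉ I)
    (hI_tall : ∀ S : Set ℕ, S.Infinite → ∃ S' : Set ℕ, S' ⊆ S ∧ S'.Infinite ∧ S' ∈ I)
    (hJ_sub : ∀ S S' : Set ℕ, S ∈ J → S' ⊆ S → S' ∈ J)
    (hJ_union : ∀ S S' : Set ℕ, S ∈ J → S' ∈ J → S ∪ S' ∈ J)
    (hJ_fin : ∀ S : Set ℕ, S.Finite → S ∈ J)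
    (hJ_proper : Set.univ ∉ J)
    (A : ℕ → ℕ → X →ₗ[ℝ] Y) :
    (∀ x : ℕ → X, (∃ η : X, ∀ ε : ℝ, 0 < ε → {n | ε ≤ ‖x n - η‖} ∈ I) →
        ∃ y : ℕ → Y,
          (∀ n, Tendsto (fun m => ∑ k ∈ Finset.range m, A n k (x k)) atTop (nhds (y n))) ∧
          (∃ r : ℝ, ∀ n, ‖y n‖ ≤ r) ∧
          (∀ ε : ℝ, 0 < ε → {n | ε ≤ ‖y n‖} ∈ J)) ↔
      ∃ k₁ : ℕ,
        (∀ n k, k₁ ≤ k → A n k = 0) ∧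
        (∀ x : X, ∀ k, k < k₁ → ∃ C : ℝ, ∀ n, ‖A n k x‖ ≤ C) ∧
        (∀ x : X, ∀ k, k < k₁ → ∀ ε : ℝ, 0 < ε → {n | ε ≤ ‖A n k x‖} ∈ J) := by
  classical
  constructor
  · intro hyp
    -- Step 1: only finitely many nonzero columns
    have hK : {k | ∃ n, A n k ≠ 0}.Finite := by
      by_contra hfin
      have hKinf : {k | ∃ n, A n k ≠ 0}.Infinite := hfin
      obtain ⟨K', hK'sub, hK'inf, hK'I⟩ := hI_tall _ hKinf
      by_cases hcase : ∃ n, {k | k ∈ K' ∧ A n k ≠ 0}.Infinite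
      · -- Case A: some row has infinitely many nonzero entries on K'
        obtain ⟨n₀, hS⟩ := hcase
        have hw : ∀ k, ∃ v : X, k ∈ {k | k ∈ K' ∧ A n₀ k ≠ 0} → ‖A n₀ k v‖ = 1 := by
          intro k
          by_cases hk : k ∈ {k | k ∈ K' ∧ A n₀ k ≠ 0}
          · obtain ⟨u, hu⟩ : ∃ u, A n₀ k u ≠ 0 := by
              by_contra h; push_neg at h
              exact hk.2 (LinearMap.ext fun u => h u)
            refine ⟨(‖A n₀ k u‖)⁻¹ • u, fun _ => ?_⟩
            rw [map_smul, norm_smul, norm_inv, norm_norm,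
              inv_mul_cancel₀ (norm_ne_zero_iff.mpr hu)]
          · exact ⟨0, fun h => absurd h hk⟩
        choose w hw using hw
        set x : ℕ → X := fun k => if k ∈ {k | k ∈ K' ∧ A n₀ k ≠ 0} then w k else 0 with hxdef
        have hxI : ∃ η : X, ∀ ε : ℝ, 0 < ε → {n | ε ≤ ‖x n - η‖} ∈ I := by
          refine ⟨0, fun ε hε => hI_sub K' _ hK'I fun m hm => ?_⟩
          simp only [Set.mem_setOf_eq, sub_zero] at hm
          by_contra hmK
          have hxz : x m = 0 := if_neg (fun hmS => hmK hmS.1)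
          rw [hxz, norm_zero] at hm; linarith
        obtain ⟨y, hconv, -, -⟩ := hyp x hxI
        have hterm : Tendsto (fun m => A n₀ m (x m)) atTop (nhds 0) := by
          have h1 := ((hconv n₀).comp (tendsto_add_atTop_nat 1)).sub (hconv n₀)
          simp only [Function.comp] at h1
          have heq : (fun m => (∑ k ∈ Finset.range (m + 1), A n₀ k (x k))
              - ∑ k ∈ Finset.range m, A n₀ k (x k)) = fun m => A n₀ m (x m) := by
            funext m
            rw [Finset.sum_range_succ, add_sub_cancel_left]
          rw [heq, sub_self] at h1
          exact h1
        have hev : ∀ᶠ m in atTop, ‖A n₀ m (x m)‖ < 1 := by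
          have := (NormedAddCommGroup.tendsto_nhds_zero.mp hterm) 1 one_pos
          exact this
        obtain ⟨M, hM⟩ := eventually_atTop.mp hev
        obtain ⟨k, hkS, hkM⟩ := hS.exists_gt M
        have h1 : x k = w k := if_pos hkS
        have := hM k hkM.le
        rw [h1, hw k hkS] at this
        linarith
      · -- Case B: every row has finitely many nonzero entries on K'
        push_neg at hcase
        have hBfin : ∀ n, {k | k ∈ K' ∧ A n k ≠ 0}.Finite :=
          fun n => hcase n
        have exnext : ∀ L : List (ℕ × ℕ × X), ∃ t : ℕ × ℕ × X,
            t.1 ∈ K' ∧ (∀ s ∈ L, s.1 < t.1) ∧ (∀ s ∈ L, A s.2.1 t.1 = 0) ∧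
            ((L.length : ℝ) + 1 + (L.map (fun s => ‖A t.2.1 s.1 s.2.2‖)).sum
              ≤ ‖A t.2.1 t.1 t.2.2‖) := by
          intro L
          have hbad : ((⋃ s ∈ {s | s ∈ L}, {k | k ∈ K' ∧ A s.2.1 k ≠ 0})
              ∪ (⋃ s ∈ {s | s ∈ L}, Set.Iic s.1)).Finite :=
            Set.Finite.union
              (Set.Finite.biUnion L.finite_toSet fun s _ => hBfin s.2.1)
              (Set.Finite.biUnion L.finite_toSet fun s _ => Set.finite_Iic _)
          obtain ⟨k, hkK', hknot⟩ := (hK'inf.diff hbad).nonempty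
          have hklt : ∀ s ∈ L, s.1 < k := by
            intro s hs
            by_contra hle; push_neg at hle
            exact hknot (Or.inr (Set.mem_biUnion hs hle))
          have hkzero : ∀ s ∈ L, A s.2.1 k = 0 := by
            intro s hs
            by_contra hne
            exact hknot (Or.inl (Set.mem_biUnion hs ⟨hkK', hne⟩))
          obtain ⟨n, hn⟩ := hK'sub hkK'
          obtain ⟨u, hu⟩ : ∃ u, A n k u ≠ 0 := by
            by_contra h; push_neg at h; exact hn (LinearMap.ext fun u => h u)
          have hau : (0 : ℝ) < ‖A n k u‖ := norm_pos_iff.mpr hu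
          set Sg : ℝ := (L.map (fun s => ‖A n s.1 s.2.2‖)).sum with hSgdef
          have hSg : 0 ≤ Sg := List.sum_nonneg (by
            intro a ha
            obtain ⟨s, -, rfl⟩ := List.mem_map.mp ha
            exact norm_nonneg _)
          set c : ℝ := ((L.length : ℝ) + 1 + Sg) / ‖A n k u‖ with hcdef
          have hcnn : 0 ≤ c := by positivity
          refine ⟨(k, n, c • u), hkK', hklt, hkzero, ?_⟩
          simp only
          rw [map_smul, norm_smul, Real.norm_eq_abs, abs_of_nonneg hcnn, hcdef,
            div_mul_cancel₀ _ (ne_of_gt hau)]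
        choose pick hp1 hp2 hp3 hp4 using exnext
        set F : ℕ → List (ℕ × ℕ × X) := fun i => Nat.rec [] (fun _ L => pick L :: L) i
          with hFdef
        set g : ℕ → ℕ × ℕ × X := fun i => pick (F i) with hgdef
        have hFs : ∀ i, F (i + 1) = g i :: F i := fun i => rfl
        have hFmem : ∀ i s, s ∈ F i ↔ ∃ j, j < i ∧ g j = s := by
          intro i
          induction i with
          | zero => intro s; simp [hFdef]
          | succ i ih =>
            intro s
            rw [hFs, List.mem_cons]
            constructor
            · rintro (rfl | hs)
              · exact ⟨i, Nat.lt_succ_self i, rfl⟩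
              · obtain ⟨j, hj, hjs⟩ := (ih s).mp hs
                exact ⟨j, Nat.lt_succ_of_lt hj, hjs⟩
            · rintro ⟨j, hj, rfl⟩
              rcases Nat.lt_succ_iff_lt_or_eq.mp hj with h | rfl
              · exact Or.inr ((ih _).mpr ⟨j, h, rfl⟩)
              · exact Or.inl rfl
        have hFlen : ∀ i, (F i).length = i := by
          intro i
          induction i with
          | zero => rfl
          | succ i ih => rw [hFs]; simp [ih]
        have hFsum : ∀ (f : ℕ × ℕ × X → ℝ) i,
            ((F i).map f).sum = ∑ j ∈ Finset.range i, f (g j) := by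
          intro f i
          induction i with
          | zero => simp [hFdef]
          | succ i ih =>
            rw [hFs, List.map_cons, List.sum_cons, ih, Finset.sum_range_succ]
            ring
        have hg1 : ∀ i, (g i).1 ∈ K' := fun i => hp1 (F i)
        have hg2 : ∀ {j i : ℕ}, j < i → (g j).1 < (g i).1 :=
          fun {j i} h => hp2 (F i) _ ((hFmem i _).mpr ⟨j, h, rfl⟩)
        have hg3 : ∀ {j i : ℕ}, j < i → A (g j).2.1 (g i).1 = 0 :=
          fun {j i} h => hp3 (F i) _ ((hFmem i _).mpr ⟨j, h, rfl⟩)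
        have hg4 : ∀ i : ℕ, (i : ℝ) + 1 +
            ∑ j ∈ Finset.range i, ‖A (g i).2.1 (g j).1 (g j).2.2‖
              ≤ ‖A (g i).2.1 (g i).1 (g i).2.2‖ := by
          intro i
          have h := hp4 (F i)
          rwa [hFlen, hFsum] at h
        have hκ : StrictMono (fun i => (g i).1) := fun a b h => hg2 h
        set x : ℕ → X := fun k =>
          if h : ∃ i, (g i).1 = k then (g (Nat.find h)).2.2 else 0 with hxdef
        have hx_at : ∀ i, x ((g i).1) = (g i).2.2 := by
          intro i
          have hex : ∃ j, (g j).1 = (g i).1 := ⟨i, rfl⟩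
          rw [hxdef]
          simp only [dif_pos hex]
          have : Nat.find hex = i := hκ.injective (Nat.find_spec hex)
          rw [this]
        have hx_zero : ∀ k, (∀ i, (g i).1 ≠ k) → x k = 0 := by
          intro k hk
          rw [hxdef]
          exact dif_neg (by push_neg; exact hk)
        have hxI : ∃ η : X, ∀ ε : ℝ, 0 < ε → {n | ε ≤ ‖x n - η‖} ∈ I := by
          refine ⟨0, fun ε hε => hI_sub K' _ hK'I fun m hm => ?_⟩
          simp only [Set.mem_setOf_eq, sub_zero] at hm
          by_cases hex : ∃ i, (g i).1 = m
          · obtain ⟨i, rfl⟩ := hex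
            exact hg1 i
          · push_neg at hex
            rw [hx_zero m hex, norm_zero] at hm
            linarith
        obtain ⟨y, hconv, ⟨r, hr⟩, -⟩ := hyp x hxI
        have key : ∀ i, y ((g i).2.1)
            = ∑ j ∈ Finset.range (i + 1), A (g i).2.1 ((g j).1) ((g j).2.2) := by
          intro i
          refine tendsto_nhds_unique (hconv _)
            (tendsto_atTop_of_eventually_const (i₀ := (g i).1 + 1) ?_)
          intro m hm
          set n := (g i).2.1 with hndef
          set Φ : Finset ℕ := (Finset.range m).filter (fun j => (g j).1 < m) with hΦdef
          have hinj : ∀ a ∈ Φ, ∀ b ∈ Φ, (g a).1 = (g b).1 → a = b :=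
            fun a _ b _ hab => hκ.injective hab
          have hsub1 : Finset.range (i + 1) ⊆ Φ := by
            intro j hj
            rw [Finset.mem_range] at hj
            have hji : j ≤ i := Nat.lt_succ_iff.mp hj
            have h1 : (g j).1 ≤ (g i).1 := hκ.monotone hji
            have h2 : (g j).1 < m := by omega
            exact Finset.mem_filter.mpr
              ⟨Finset.mem_range.mpr (lt_of_le_of_lt hκ.le_apply h2), h2⟩
          have himgsub : Φ.image (fun j => (g j).1) ⊆ Finset.range m := by
            intro k hk
            obtain ⟨j, hj, rfl⟩ := Finset.mem_image.mp hk
            exact Finset.mem_range.mpr (Finset.mem_filter.mp hj).2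
          have hvanish : ∀ k ∈ Finset.range m,
              k ∉ Φ.image (fun j => (g j).1) → A n k (x k) = 0 := by
            intro k hk hknot
            have hnone : ∀ j, (g j).1 ≠ k := by
              intro j hj
              apply hknot
              refine Finset.mem_image.mpr ⟨j, ?_, hj⟩
              have hjm : (g j).1 < m := hj ▸ Finset.mem_range.mp hk
              exact Finset.mem_filter.mpr
                ⟨Finset.mem_range.mpr (lt_of_le_of_lt hκ.le_apply hjm), hjm⟩
            rw [hx_zero k hnone, map_zero]
          have hvanish2 : ∀ j ∈ Φ, j ∉ Finset.range (i + 1)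
              → A n ((g j).1) ((g j).2.2) = 0 := by
            intro j _ hj
            rw [Finset.mem_range, Nat.lt_succ_iff, not_le] at hj
            rw [hndef, hg3 hj, LinearMap.zero_apply]
          calc ∑ k ∈ Finset.range m, A n k (x k)
              = ∑ k ∈ Φ.image (fun j => (g j).1), A n k (x k) :=
                (Finset.sum_subset himgsub hvanish).symm
            _ = ∑ j ∈ Φ, A n ((g j).1) (x ((g j).1)) := Finset.sum_image hinj
            _ = ∑ j ∈ Φ, A n ((g j).1) ((g j).2.2) := by
                refine Finset.sum_congr rfl fun j _ => ?_
                rw [hx_at j]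
            _ = ∑ j ∈ Finset.range (i + 1), A n ((g j).1) ((g j).2.2) :=
                (Finset.sum_subset hsub1 hvanish2).symm
        have hbig : ∀ i : ℕ, (i : ℝ) + 1 ≤ ‖y ((g i).2.1)‖ := by
          intro i
          rw [key i, Finset.sum_range_succ]
          set S := ∑ j ∈ Finset.range i, A (g i).2.1 ((g j).1) ((g j).2.2) with hSdef
          set t := A (g i).2.1 ((g i).1) ((g i).2.2) with htdef
          have h2 : ‖S‖ ≤ ∑ j ∈ Finset.range i, ‖A (g i).2.1 ((g j).1) ((g j).2.2)‖ :=
            norm_sum_le _ _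
          have h4 : ‖t‖ ≤ ‖S + t‖ + ‖S‖ := by
            calc ‖t‖ = ‖S + t - S‖ := by rw [add_sub_cancel_left]
              _ ≤ ‖S + t‖ + ‖S‖ := norm_sub_le _ _
          have h1 := hg4 i
          linarith
        have h5 := hbig ⌈r⌉₊
        have h6 : r ≤ (⌈r⌉₊ : ℝ) := Nat.le_ceil r
        have h7 := hr ((g ⌈r⌉₊).2.1)
        linarith
    obtain ⟨b, hb⟩ := hK.bddAbove
    -- behavior of single columns
    have hcol : ∀ (v : X) (k0 : ℕ), (∃ r : ℝ, ∀ n, ‖A n k0 v‖ ≤ r) ∧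
        (∀ ε : ℝ, 0 < ε → {n | ε ≤ ‖A n k0 v‖} ∈ J) := by
      intro v k0
      set e : ℕ → X := fun m => if m = k0 then v else 0 with he
      have heI : ∃ η : X, ∀ ε : ℝ, 0 < ε → {n | ε ≤ ‖e n - η‖} ∈ I := by
        refine ⟨0, fun ε hε => hI_sub {k0} _ (hI_fin _ (Set.finite_singleton k0)) ?_⟩
        intro m hm
        simp only [Set.mem_setOf_eq, sub_zero] at hm
        by_contra hmk
        have hez : e m = 0 := if_neg (by simpa using hmk)
        rw [hez, norm_zero] at hm; linarith
      obtain ⟨y, hconv, hbd, hJ0⟩ := hyp e heI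
      have hy : ∀ n, y n = A n k0 v := by
        intro n
        refine tendsto_nhds_unique (hconv n)
          (tendsto_atTop_of_eventually_const (i₀ := k0 + 1) ?_)
        intro m hm
        rw [Finset.sum_eq_single_of_mem k0 (Finset.mem_range.mpr (by omega))]
        · simp [he]
        · intro k _ hk
          have : e k = 0 := if_neg hk
          rw [this, map_zero]
      constructor
      · obtain ⟨r, hr⟩ := hbd
        exact ⟨r, fun n => by rw [← hy n]; exact hr n⟩
      · intro ε hε
        have := hJ0 ε hε
        have hset : {n | ε ≤ ‖y n‖} = {n | ε ≤ ‖A n k0 v‖} := by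
          ext n; simp [hy n]
        rwa [hset] at this
    refine ⟨b + 1, ?_, ?_, ?_⟩
    · intro n k hk
      by_contra hne
      have hmem : k ∈ {k | ∃ n, A n k ≠ 0} := ⟨n, hne⟩
      have := hb hmem
      omega
    · intro v k _
      exact (hcol v k).1
    · intro v k _
      exact (hcol v k).2
  · rintro ⟨k₁, hB1, hB2, hB3⟩ x -
    refine ⟨fun n => ∑ k ∈ Finset.range k₁, A n k (x k), ?_, ?_, ?_⟩
    · intro n
      refine tendsto_atTop_of_eventually_const (i₀ := k₁) ?_
      intro m hm
      refine (Finset.sum_subset (Finset.range_subset_range.mpr hm) ?_).symm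
      intro k _ hk
      rw [hB1 n k (by simpa using hk)]
      simp
    · have hB2' : ∀ k, ∃ C : ℝ, ∀ n, k < k₁ → ‖A n k (x k)‖ ≤ C := by
        intro k
        by_cases hk : k < k₁
        · obtain ⟨C, hC⟩ := hB2 (x k) k hk
          exact ⟨C, fun n _ => hC n⟩
        · exact ⟨0, fun n hk' => absurd hk' hk⟩
      choose C hC using hB2'
      refine ⟨∑ k ∈ Finset.range k₁, C k, fun n => ?_⟩
      calc ‖∑ k ∈ Finset.range k₁, A n k (x k)‖
          ≤ ∑ k ∈ Finset.range k₁, ‖A n k (x k)‖ := norm_sum_le _ _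
        _ ≤ ∑ k ∈ Finset.range k₁, C k :=
            Finset.sum_le_sum fun k hk => hC k n (Finset.mem_range.mp hk)
    · intro ε hε
      rcases Nat.eq_zero_or_pos k₁ with rfl | hk₁
      · refine hJ_sub ∅ _ (hJ_fin ∅ Set.finite_empty) ?_
        intro n hn
        simp only [Finset.range_zero, Finset.sum_empty, Set.mem_setOf_eq, norm_zero] at hn
        linarith
      · have hstep : ∀ m, m ≤ k₁ →
            {n | ∃ k, k < m ∧ ε / k₁ ≤ ‖A n k (x k)‖} ∈ J := by
          intro m
          induction m with
          | zero =>
            intro _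
            refine hJ_sub ∅ _ (hJ_fin ∅ Set.finite_empty) ?_
            rintro n ⟨k, hk, -⟩
            omega
          | succ m ih =>
            intro hm
            have h1 := ih (by omega)
            have h2 := hB3 (x m) m (by omega) (ε / k₁) (by positivity)
            refine hJ_sub _ _ (hJ_union _ _ h1 h2) ?_
            rintro n ⟨k, hk, hnk⟩
            rcases Nat.lt_succ_iff_lt_or_eq.mp hk with h | rfl
            · exact Or.inl ⟨k, h, hnk⟩
            · exact Or.inr hnk
        refine hJ_sub _ _ (hstep k₁ le_rfl) ?_
        intro n hn
        simp only [Set.mem_setOf_eq] at hn ⊢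
        by_contra hno
        push_neg at hno
        have h1 : ‖∑ k ∈ Finset.range k₁, A n k (x k)‖
            ≤ ∑ k ∈ Finset.range k₁, ‖A n k (x k)‖ := norm_sum_le _ _
        have hlt : ∑ k ∈ Finset.range k₁, ‖A n k (x k)‖
            < ∑ _k ∈ Finset.range k₁, ε / k₁ :=
          Finset.sum_lt_sum_of_nonempty (by simp [hk₁.ne']) 
            (fun k hk => hno k (Finset.mem_range.mp hk))
        rw [Finset.sum_const, Finset.card_range, nsmul_eq_mul,
          mul_div_cancel₀ _ (by exact_mod_cast hk₁.ne' : (k₁ : ℝ) ≠ 0)] at hlt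
        linarith
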